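/- Let M be a residually finite monoid and A a set. Then the set of periodic configurations (configurations with finite orbit under the shift action) is dense in A^M for the product (prodiscrete) topology: for every x ∈ A^M and every finite F ⊆ M there exists a periodic configuration y ∈ A^M agreeing with x on F. -/

import Mathlib

theorem periodic_configurations_dense_of_residually_finite
    {M : Type*} [Monoid M] {A : Type*}
    (hres : ∀ m m' : M, m ≠ m' →
      ∃ (N : Type) (instN : Monoid N), Finite N ∧
        ∃ φ : @MonoidHom M N _ instN.toMulOneClass.toMulOne, φ m ≠ φ m')
    (x : M → A) (F : Finset M) :
    ∃ y : M → A,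
      (Set.range fun m : M => (fun u => y (u * m))).Finite ∧
      ∀ f ∈ F, y f = x f := by
  classical
  set P := {p : M × M // p.1 ∈ F ∧ p.2 ∈ F ∧ p.1 ≠ p.2} with hP
  choose N instN hfin φ hφ using fun p : P => hres p.1.1 p.1.2 p.2.2.2
  letI : ∀ p, Monoid (N p) := instN
  haveI : ∀ p, Finite (N p) := hfin
  haveI : Finite P := by
    have hsub : {p : M × M | p.1 ∈ F ∧ p.2 ∈ F ∧ p.1 ≠ p.2} ⊆ ↑F ×ˢ ↑F := by
      intro p hp; exact Set.mk_mem_prod hp.1 hp.2.1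
    exact ((F.finite_toSet.prod F.finite_toSet).subset hsub).to_subtype
  haveI : Finite (∀ p, N p) := Pi.finite
  let Φ : M →* ∀ p, N p := Pi.monoidHom φ
  have hinj : ∀ m ∈ F, ∀ m' ∈ F, Φ m = Φ m' → m = m' := by
    intro m hm m' hm' h
    by_contra hne
    exact hφ ⟨(m, m'), hm, hm', hne⟩ (congrFun h ⟨(m, m'), hm, hm', hne⟩)
  let s : (∀ p, N p) → M := fun n =>
    if h : ∃ f, f ∈ F ∧ Φ f = n then h.choose else 1
  refine ⟨fun m => x (s (Φ m)), ?_, ?_⟩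
  · apply Set.Finite.subset (Set.finite_range fun n : ∀ p, N p => fun u => x (s (Φ u * n)))
    rintro _ ⟨m, rfl⟩
    exact ⟨Φ m, by funext u; simp [map_mul]⟩
  · intro f hf
    have h : ∃ g, g ∈ F ∧ Φ g = Φ f := ⟨f, hf, rfl⟩
    have : s (Φ f) = f := by
      simp only [s, dif_pos h]
      exact hinj _ h.choose_spec.1 _ hf h.choose_spec.2
    exact congrArg x this
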